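/- arXiv:2407.08934 — 6 statements merged into one kernel-verified Lean document; each statement's English description precedes it below -/
import Mathlib

section
/- The vector space of all maps w : Z → V is the internal direct sum of the pure interaction spaces E_I over all subsets I ⊆ {1,…,k}; equivalently, every w : Z → V has a unique decomposition w = ∑_{I ⊆ {1,…,k}} w_I with w_I ∈ E_I. -/
set_option linter.unusedSectionVars false
set_option maxHeartbeats 1000000


open Finset

/-- Averaging operator π_J. -/
noncomputable def piAvg {ι : Type*} [Fintype ι] [DecidableEq ι] {Z : ι → Type*} [∀ i, Fintype (Z i)]
    [∀ i, DecidableEq (Z i)] {V : Type*} [AddCommGroup V] [Module ℝ V]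
    (J : Finset ι) (w : (∀ i, Z i) → V) : (∀ i, Z i) → V :=
  fun z => (∏ i ∈ Jᶜ, (Fintype.card (Z i) : ℝ))⁻¹ •
    ∑ z' ∈ Finset.univ.filter (fun z' : ∀ i, Z i => ∀ i ∈ J, z' i = z i), w z'

/-- Interaction projection Q_I. -/
noncomputable def Qop {ι : Type*} [Fintype ι] [DecidableEq ι] {Z : ι → Type*} [∀ i, Fintype (Z i)]
    [∀ i, DecidableEq (Z i)] {V : Type*} [AddCommGroup V] [Module ℝ V]
    (I : Finset ι) (w : (∀ i, Z i) → V) : (∀ i, Z i) → V :=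
  ∑ J ∈ I.powerset, ((-1 : ℝ) ^ (I \ J).card) • piAvg J w

/-- Pure interaction space E_I. -/
def pureInteraction {ι : Type*} [Fintype ι] [DecidableEq ι] (Z : ι → Type*)
    [∀ i, Fintype (Z i)] [∀ i, DecidableEq (Z i)] (V : Type*) [AddCommGroup V] [Module ℝ V]
    (I : Finset ι) : Submodule ℝ ((∀ i, Z i) → V) where
  carrier := {w | (∀ z z' : ∀ i, Z i, (∀ i ∈ I, z i = z' i) → w z = w z') ∧
    ∀ J : Finset ι, J ⊂ I → ∀ z : ∀ i, Z i,
      ∑ z' ∈ Finset.univ.filter (fun z' : ∀ i, Z i => ∀ i ∈ J, z' i = z i), w z' = 0}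
  add_mem' := by
    rintro a b ⟨ha1, ha2⟩ ⟨hb1, hb2⟩
    refine ⟨fun z z' h => by simp only [Pi.add_apply, ha1 z z' h, hb1 z z' h],
      fun J hJ z => ?_⟩
    simp only [Pi.add_apply, Finset.sum_add_distrib]
    rw [ha2 J hJ z, hb2 J hJ z, add_zero]
  zero_mem' := by
    refine ⟨fun z z' _ => rfl, fun J hJ z => by simp⟩
  smul_mem' := by
    rintro c a ⟨ha1, ha2⟩
    refine ⟨fun z z' h => by simp only [Pi.smul_apply, ha1 z z' h], fun J hJ z => ?_⟩
    simp only [Pi.smul_apply, ← Finset.smul_sum]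
    rw [ha2 J hJ z, smul_zero]

section
variable {ι : Type*} [Fintype ι] [DecidableEq ι] {Z : ι → Type*} [∀ i, Fintype (Z i)]
  [∀ i, DecidableEq (Z i)] [∀ i, Nonempty (Z i)] {V : Type*} [AddCommGroup V] [Module ℝ V]

lemma fiber_eq_piFinset (A : Finset ι) (y : ∀ i, Z i) :
    univ.filter (fun z' : ∀ i, Z i => ∀ i ∈ A, z' i = y i) =
    Fintype.piFinset (fun i => if i ∈ A then {y i} else univ) := by
  ext z'
  simp only [mem_filter, mem_univ, true_and, Fintype.mem_piFinset]
  constructor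
  · intro h i
    by_cases hi : i ∈ A <;> simp [hi, h]
  · intro h i hi
    have := h i
    simpa [hi] using this

lemma fiber_card (A : Finset ι) (y : ∀ i, Z i) :
    (univ.filter (fun z' : ∀ i, Z i => ∀ i ∈ A, z' i = y i)).card =
    ∏ i ∈ Aᶜ, Fintype.card (Z i) := by
  rw [fiber_eq_piFinset, Fintype.card_piFinset, ← Finset.prod_mul_prod_compl A]
  have h1 : ∏ i ∈ A, (if i ∈ A then ({y i} : Finset (Z i)) else univ).card = 1 := by
    apply Finset.prod_eq_one; intro i hi; simp [hi]
  rw [h1, one_mul]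
  apply Finset.prod_congr rfl
  intro i hi
  simp only [mem_compl] at hi
  simp [hi]

def fiberSum (J : Finset ι) (w : (∀ i, Z i) → V) : (∀ i, Z i) → V :=
  fun z => ∑ z' ∈ univ.filter (fun z' : ∀ i, Z i => ∀ i ∈ J, z' i = z i), w z'

lemma fiberSum_smul (J : Finset ι) (c : ℝ) (w : (∀ i, Z i) → V) :
    fiberSum J (c • w) = c • fiberSum J w := by
  funext z
  simp only [fiberSum, Pi.smul_apply, Finset.smul_sum]

lemma fiberSum_comp (J K : Finset ι) (w : (∀ i, Z i) → V) (z : ∀ i, Z i) :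
    fiberSum K (fiberSum J w) z =
      (∏ i ∈ (J ∪ K)ᶜ, Fintype.card (Z i)) • fiberSum (J ∩ K) w z := by
  classical
  unfold fiberSum
  have h1 : ∀ z' : ∀ i, Z i,
      (∑ z'' ∈ univ.filter (fun z'' : ∀ i, Z i => ∀ i ∈ J, z'' i = z' i), w z'') =
      ∑ z'' ∈ univ, if (∀ i ∈ J, z'' i = z' i) then w z'' else 0 :=
    fun z' => Finset.sum_filter _ _
  simp_rw [h1]
  rw [Finset.sum_comm]
  have h2 : ∀ z'' : ∀ i, Z i,
      (∑ z' ∈ univ.filter (fun z' : ∀ i, Z i => ∀ i ∈ K, z' i = z i),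
        if (∀ i ∈ J, z'' i = z' i) then w z'' else 0) =
      if (∀ i ∈ J ∩ K, z'' i = z i) then
        (∏ i ∈ (J ∪ K)ᶜ, Fintype.card (Z i)) • w z'' else 0 := by
    intro z''
    rw [← Finset.sum_filter, Finset.sum_const, Finset.filter_filter]
    by_cases hc : ∀ i ∈ J ∩ K, z'' i = z i
    · rw [if_pos hc]
      have heq : univ.filter
            (fun z' : ∀ i, Z i => (∀ i ∈ K, z' i = z i) ∧ ∀ i ∈ J, z'' i = z' i)
          = univ.filter (fun z' : ∀ i, Z i =>
              ∀ i ∈ J ∪ K, z' i = (fun i => if i ∈ K then z i else z'' i) i) := by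
        ext z'
        simp only [mem_filter, mem_univ, true_and]
        constructor
        · rintro ⟨hK, hJ⟩ i hi
          by_cases hik : i ∈ K
          · simp [hik, hK i hik]
          · have hij : i ∈ J := by
              rcases mem_union.1 hi with h | h
              · exact h
              · exact absurd h hik
            simp [hik, (hJ i hij).symm]
        · intro h
          constructor
          · intro i hi
            have := h i (mem_union_right _ hi)
            simpa [hi] using this
          · intro i hi
            by_cases hik : i ∈ K
            · have h1 := h i (mem_union_right _ hik)
              rw [if_pos hik] at h1
              rw [h1]
              exact hc i (mem_inter.2 ⟨hi, hik⟩)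
            · have h1 := h i (mem_union_left _ hi)
              rw [if_neg hik] at h1
              exact h1.symm
      rw [heq, fiber_card]
    · rw [if_neg hc]
      push_neg at hc
      obtain ⟨i0, hi0, hne⟩ := hc
      have hempty : univ.filter
          (fun z' : ∀ i, Z i => (∀ i ∈ K, z' i = z i) ∧ ∀ i ∈ J, z'' i = z' i) = ∅ := by
        rw [Finset.filter_eq_empty_iff]
        rintro z' _ ⟨hK, hJ⟩
        exact hne ((hJ i0 (mem_of_mem_inter_left hi0)).trans (hK i0 (mem_of_mem_inter_right hi0)))
      simp [hempty]
  simp_rw [h2]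
  rw [← Finset.sum_filter, ← Finset.smul_sum]

lemma prodCard_pos (s : Finset ι) : (0:ℝ) < ∏ i ∈ s, (Fintype.card (Z i) : ℝ) :=
  Finset.prod_pos fun i _ => by positivity

lemma prodCard_ne_zero (s : Finset ι) : (∏ i ∈ s, (Fintype.card (Z i) : ℝ)) ≠ 0 :=
  ne_of_gt (prodCard_pos s)

lemma piAvg_eq_fiberSum (J : Finset ι) (w : (∀ i, Z i) → V) :
    piAvg J w = (∏ i ∈ Jᶜ, (Fintype.card (Z i) : ℝ))⁻¹ • fiberSum J w := rfl

lemma nsmul_cast (n : ℕ) (v : V) : n • v = (n : ℝ) • v := (Nat.cast_smul_eq_nsmul ℝ n v).symm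

/-- L1 -/
lemma piAvg_of_subset {I J : Finset ι} (hIJ : I ⊆ J) {w : (∀ i, Z i) → V}
    (hw : w ∈ pureInteraction Z V I) : piAvg J w = w := by
  funext z
  have hconst : ∀ z' ∈ univ.filter (fun z' : ∀ i, Z i => ∀ i ∈ J, z' i = z i), w z' = w z := by
    intro z' hz'
    exact hw.1 z' z (fun i hi => (mem_filter.1 hz').2 i (hIJ hi))
  show (∏ i ∈ Jᶜ, (Fintype.card (Z i) : ℝ))⁻¹ • _ = w z
  rw [Finset.sum_congr rfl hconst, Finset.sum_const, fiber_card, nsmul_cast, Nat.cast_prod,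
    inv_smul_smul₀ (prodCard_ne_zero _)]

/-- L2 -/
lemma piAvg_of_not_subset {I J : Finset ι} (hIJ : ¬ I ⊆ J) {w : (∀ i, Z i) → V}
    (hw : w ∈ pureInteraction Z V I) : piAvg J w = 0 := by
  have hI : piAvg I w = w := piAvg_of_subset (le_refl I) hw
  have hself : w = (∏ i ∈ Iᶜ, (Fintype.card (Z i) : ℝ))⁻¹ • fiberSum I w := by
    rw [← piAvg_eq_fiberSum, hI]
  have hssub : I ∩ J ⊂ I := by
    refine Finset.ssubset_iff_subset_ne.2 ⟨Finset.inter_subset_left, ?_⟩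
    intro h
    exact hIJ (by rw [← h]; exact Finset.inter_subset_right)
  have hzero : fiberSum (I ∩ J) w = 0 := by
    funext z
    exact hw.2 (I ∩ J) hssub z
  funext z
  show (∏ i ∈ Jᶜ, (Fintype.card (Z i) : ℝ))⁻¹ • fiberSum J w z = 0
  conv_lhs => rw [hself]
  rw [fiberSum_smul]
  simp only [Pi.smul_apply]
  rw [fiberSum_comp, hzero]
  simp


lemma piAvg_congr {J : Finset ι} {z z' : ∀ i, Z i} (h : ∀ i ∈ J, z i = z' i)
    (w : (∀ i, Z i) → V) : piAvg J w z = piAvg J w z' := by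
  show _ • ∑ x ∈ _, w x = _ • ∑ x ∈ _, w x
  congr 2
  ext z''
  simp only [mem_filter, mem_univ, true_and]
  exact ⟨fun hh i hi => (hh i hi).trans (h i hi), fun hh i hi => (hh i hi).trans (h i hi).symm⟩

lemma fiberSum_piAvg (J K : Finset ι) (w : (∀ i, Z i) → V) (z : ∀ i, Z i) :
    fiberSum K (piAvg J w) z =
      (∏ i ∈ K \ J, (Fintype.card (Z i) : ℝ))⁻¹ • fiberSum (J ∩ K) w z := by
  rw [piAvg_eq_fiberSum, fiberSum_smul]
  simp only [Pi.smul_apply]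
  rw [fiberSum_comp, nsmul_cast, Nat.cast_prod, smul_smul]
  congr 1
  have hsplit : (Jᶜ : Finset ι) = (J ∪ K)ᶜ ∪ (K \ J) := by
    ext i
    simp only [mem_compl, mem_union, mem_sdiff]
    tauto
  have hdisj : Disjoint ((J ∪ K)ᶜ : Finset ι) (K \ J) := by
    rw [Finset.disjoint_left]
    intro i hi hi'
    simp only [mem_compl, mem_union] at hi
    exact hi (Or.inr (mem_sdiff.1 hi').1)
  rw [hsplit, Finset.prod_union hdisj, mul_inv]
  rw [mul_comm ((∏ i ∈ (J ∪ K)ᶜ, (Fintype.card (Z i):ℝ))⁻¹) _, mul_assoc,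
    inv_mul_cancel₀ (prodCard_ne_zero _), mul_one]

lemma fiberSum_Qop {I K : Finset ι} (w : (∀ i, Z i) → V) (z : ∀ i, Z i) :
    fiberSum K (Qop I w) z = ∑ J ∈ I.powerset,
      ((-1 : ℝ) ^ (I \ J).card * (∏ i ∈ K \ J, (Fintype.card (Z i) : ℝ))⁻¹) •
        fiberSum (J ∩ K) w z := by
  have : fiberSum K (Qop I w) z
      = ∑ J ∈ I.powerset, ((-1 : ℝ) ^ (I \ J).card) • fiberSum K (piAvg J w) z := by
    show (∑ z' ∈ _, Qop I w z') = _
    unfold Qop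
    simp only [Finset.sum_apply, Pi.smul_apply]
    rw [Finset.sum_comm]
    exact Finset.sum_congr rfl fun J _ => by rw [← Finset.smul_sum]; rfl
  rw [this]
  exact Finset.sum_congr rfl fun J _ => by rw [fiberSum_piAvg, mul_smul]

lemma Qop_fiberSum_zero {I K : Finset ι} (hK : K ⊂ I) (w : (∀ i, Z i) → V) (z : ∀ i, Z i) :
    fiberSum K (Qop I w) z = 0 := by
  classical
  obtain ⟨i0, hi0I, hi0K⟩ : ∃ i0, i0 ∈ I ∧ i0 ∉ K := by
    obtain ⟨i0, h1, h2⟩ := Finset.exists_of_ssubset hK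
    exact ⟨i0, h1, h2⟩
  rw [fiberSum_Qop]
  set F : Finset ι → V := fun J =>
    ((-1 : ℝ) ^ (I \ J).card * (∏ i ∈ K \ J, (Fintype.card (Z i) : ℝ))⁻¹) •
      fiberSum (J ∩ K) w z with hF
  have hI : I = insert i0 (I.erase i0) := (Finset.insert_erase hi0I).symm
  have hnot : i0 ∉ I.erase i0 := Finset.notMem_erase _ _
  rw [hI, Finset.sum_powerset_insert hnot]
  have hcancel : ∀ J ∈ (I.erase i0).powerset, F (insert i0 J) = - F J := by
    intro J hJ
    have hJ' : J ⊆ I.erase i0 := Finset.mem_powerset.1 hJ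
    have hi0J : i0 ∉ J := fun h => hnot (hJ' h)
    have h1 : (insert i0 J) ∩ K = J ∩ K := by
      ext i
      simp only [mem_inter, mem_insert]
      constructor
      · rintro ⟨h | h, hk⟩
        · exact absurd (h ▸ hk) hi0K
        · exact ⟨h, hk⟩
      · rintro ⟨h, hk⟩
        exact ⟨Or.inr h, hk⟩
    have h2 : K \ insert i0 J = K \ J := by
      ext i
      simp only [mem_sdiff, mem_insert]
      constructor
      · rintro ⟨hk, h⟩
        exact ⟨hk, fun hj => h (Or.inr hj)⟩
      · rintro ⟨hk, h⟩
        refine ⟨hk, ?_⟩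
        rintro (rfl | hj)
        · exact hi0K hk
        · exact h hj
    have h3 : I \ J = insert i0 (I \ insert i0 J) := by
      ext i
      simp only [mem_sdiff, mem_insert]
      constructor
      · rintro ⟨hIi, hJi⟩
        by_cases hii : i = i0
        · exact Or.inl hii
        · exact Or.inr ⟨hIi, by rintro (h | h); exact hii h; exact hJi h⟩
      · rintro (rfl | ⟨hIi, hJi⟩)
        · exact ⟨hi0I, hi0J⟩
        · exact ⟨hIi, fun h => hJi (Or.inr h)⟩
    have hnm : i0 ∉ I \ insert i0 J := by
      simp [Finset.mem_sdiff]
    have hcard : (I \ J).card = (I \ insert i0 J).card + 1 := by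
      rw [h3, Finset.card_insert_of_notMem hnm]
    rw [hF]
    simp only
    rw [h1, h2, hcard, pow_succ, ← neg_smul]
    congr 1
    ring
  rw [Finset.sum_congr rfl hcancel, Finset.sum_neg_distrib]
  exact add_neg_cancel _


lemma Qop_mem (I : Finset ι) (w : (∀ i, Z i) → V) : Qop I w ∈ pureInteraction Z V I := by
  constructor
  · intro z z' h
    unfold Qop
    simp only [Finset.sum_apply, Pi.smul_apply]
    refine Finset.sum_congr rfl fun J hJ => ?_
    rw [piAvg_congr (fun i hi => h i (Finset.mem_powerset.1 hJ hi)) w]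
  · intro K hK z
    exact Qop_fiberSum_zero hK w z

lemma piAvg_univ (w : (∀ i, Z i) → V) : piAvg (univ : Finset ι) w = w := by
  funext z
  have h1 : univ.filter (fun z' : ∀ i, Z i => ∀ i ∈ (univ : Finset ι), z' i = z i) = {z} := by
    ext z'
    simp only [mem_filter, mem_univ, true_and, mem_singleton]
    constructor
    · intro h; funext i; exact h i trivial
    · rintro rfl; exact fun i _ => rfl
  show _ • ∑ z' ∈ _, w z' = w z
  rw [h1, Finset.sum_singleton, Finset.compl_univ, Finset.prod_empty, inv_one, one_smul]

lemma sum_Qop (w : (∀ i, Z i) → V) : ∑ I : Finset ι, Qop I w = w := by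
  unfold Qop
  rw [Finset.sum_comm' (s' := fun J => univ.filter (fun I => J ⊆ I)) (t' := univ)
    (by intro I J; simp [Finset.mem_powerset])]
  have hinner : ∀ J : Finset ι,
      (∑ I ∈ univ.filter (fun I => J ⊆ I), ((-1 : ℝ) ^ (I \ J).card) • piAvg J w)
      = ((∑ M ∈ Jᶜ.powerset, (-1 : ℝ) ^ M.card)) • piAvg J w := by
    intro J
    rw [← Finset.sum_smul]
    congr 1
    apply Finset.sum_nbij' (i := fun I => I \ J) (j := fun M => J ∪ M)
    · intro I hI
      simp only [Finset.mem_filter, mem_univ, true_and] at hI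
      simp only [Finset.mem_powerset]
      intro i hi
      simp only [mem_sdiff] at hi
      simp [mem_compl, hi.2]
    · intro M hM
      simp only [Finset.mem_filter, mem_univ, true_and]
      exact Finset.subset_union_left
    · intro I hI
      simp only [Finset.mem_filter, mem_univ, true_and] at hI
      exact Finset.union_sdiff_of_subset hI
    · intro M hM
      simp only [Finset.mem_powerset] at hM
      apply Finset.union_sdiff_cancel_left
      rw [Finset.disjoint_left]
      intro i hiJ hiM
      have := hM hiM
      simp only [mem_compl] at this
      exact this hiJ
    · intro I hI; rfl
  simp_rw [hinner]
  have hval : ∀ J : Finset ι, (∑ M ∈ Jᶜ.powerset, (-1 : ℝ) ^ M.card)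
      = if J = univ then 1 else 0 := by
    intro J
    have := Finset.sum_powerset_neg_one_pow_card (x := (Jᶜ : Finset ι))
    have hcast : (∑ M ∈ Jᶜ.powerset, (-1 : ℝ) ^ M.card)
        = ((∑ M ∈ Jᶜ.powerset, (-1 : ℤ) ^ M.card : ℤ) : ℝ) := by
      push_cast
      rfl
    rw [hcast, this]
    by_cases h : (Jᶜ : Finset ι) = ∅
    · rw [if_pos h, if_pos]
      · norm_num
      · rwa [← Finset.compl_eq_empty_iff]
    · rw [if_neg h, if_neg]
      · norm_num
      · intro hJ
        exact h (by rw [hJ, Finset.compl_univ])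
  simp_rw [hval]
  rw [Finset.sum_eq_single (univ : Finset ι)]
  · rw [if_pos rfl, one_smul, piAvg_univ]
  · intro J _ hJ
    rw [if_neg hJ, zero_smul]
  · intro h
    exact absurd (mem_univ _) h

lemma decomposition_unique {f : Finset ι → ((∀ i, Z i) → V)}
    (hmem : ∀ I, f I ∈ pureInteraction Z V I)
    (hsum : ∑ I : Finset ι, f I = 0) : ∀ I, f I = 0 := by
  have key : ∀ K : Finset ι, ∑ I ∈ K.powerset, f I = 0 := by
    intro K
    have havg : piAvg K (∑ I : Finset ι, f I) = ∑ I : Finset ι, piAvg K (f I) := by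
      funext z
      show _ • ∑ z' ∈ _, (∑ I : Finset ι, f I) z' = _
      simp only [Finset.sum_apply]
      rw [Finset.sum_comm, Finset.smul_sum]
      exact Finset.sum_congr rfl fun I _ => rfl
    have h0 : piAvg K (0 : (∀ i, Z i) → V) = 0 := by
      funext z
      show _ • ∑ z' ∈ _, (0 : (∀ i, Z i) → V) z' = _
      simp
    have h1 : ∀ I ∈ (univ : Finset (Finset ι)), piAvg K (f I) = if I ⊆ K then f I else 0 := by
      intro I _
      by_cases h : I ⊆ K
      · rw [if_pos h, piAvg_of_subset h (hmem I)]
      · rw [if_neg h, piAvg_of_not_subset h (hmem I)]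
    have h2 : (univ : Finset (Finset ι)).filter (fun I => I ⊆ K) = K.powerset := by
      ext I; simp [Finset.mem_powerset]
    calc ∑ I ∈ K.powerset, f I
        = ∑ I ∈ univ.filter (fun I => I ⊆ K), f I := by rw [h2]
      _ = ∑ I : Finset ι, if I ⊆ K then f I else 0 := Finset.sum_filter _ _
      _ = ∑ I : Finset ι, piAvg K (f I) := by rw [Finset.sum_congr rfl h1]
      _ = piAvg K (∑ I : Finset ι, f I) := havg.symm
      _ = 0 := by rw [hsum, h0]
  intro I
  induction I using Finset.strongInduction with
  | _ I ih =>
    have hK := key I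
    rw [← Finset.add_sum_erase _ _ (Finset.mem_powerset_self I)] at hK
    have hz : ∑ J ∈ (I.powerset).erase I, f J = 0 := by
      apply Finset.sum_eq_zero
      intro J hJ
      have h1 := Finset.mem_of_mem_erase hJ
      have h2 := Finset.ne_of_mem_erase hJ
      exact ih J (lt_of_le_of_ne (Finset.mem_powerset.1 h1) h2)
    rw [hz, add_zero] at hK
    exact hK

end

/-- The space of all maps `Z → V` is the internal direct sum of the pure
interaction spaces `E_I`; equivalently every `w` has a unique decomposition
`w = ∑_{I ⊆ [k]} w_I` with `w_I ∈ E_I`. -/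
theorem interaction_direct_sum {k : ℕ} (hk : 1 ≤ k) (Z : Fin k → Type*)
    [∀ i, Fintype (Z i)] [∀ i, Nonempty (Z i)] [∀ i, DecidableEq (Z i)]
    (V : Type*) [AddCommGroup V] [Module ℝ V] [FiniteDimensional ℝ V] :
    DirectSum.IsInternal (fun I : Finset (Fin k) => pureInteraction Z V I) ∧
    ∀ w : (∀ i, Z i) → V, ∃! f : Finset (Fin k) → ((∀ i, Z i) → V),
      (∀ I, f I ∈ pureInteraction Z V I) ∧ w = ∑ I : Finset (Fin k), f I := by
  classical
  have huniq : ∀ w : (∀ i, Z i) → V, ∃! f : Finset (Fin k) → ((∀ i, Z i) → V),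
      (∀ I, f I ∈ pureInteraction Z V I) ∧ w = ∑ I : Finset (Fin k), f I := by
    intro w
    refine ⟨fun I => Qop I w, ⟨fun I => Qop_mem I w, (sum_Qop w).symm⟩, ?_⟩
    rintro g ⟨hg1, hg2⟩
    set d : Finset (Fin k) → ((∀ i, Z i) → V) := fun I => g I - Qop I w with hd
    have hdm : ∀ I, d I ∈ pureInteraction Z V I := fun I => sub_mem (hg1 I) (Qop_mem I w)
    have hds : ∑ I : Finset (Fin k), d I = 0 := by
      rw [hd]
      rw [Finset.sum_sub_distrib, ← hg2, sum_Qop, sub_self]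
    have hz := decomposition_unique hdm hds
    funext I
    have h := hz I
    rw [hd] at h
    simpa [sub_eq_zero] using h
  refine ⟨⟨?_, ?_⟩, huniq⟩
  · -- injective
    rw [injective_iff_map_eq_zero]
    intro x hx
    have h1 : DirectSum.coeAddMonoidHom (fun I : Finset (Fin k) => pureInteraction Z V I) x
        = ∑ I : Finset (Fin k), ((x I : (∀ i, Z i) → V)) := by
      conv_lhs => rw [← DirectSum.sum_univ_of x]
      rw [map_sum]
      exact Finset.sum_congr rfl fun I _ => DirectSum.coeAddMonoidHom_of _ _ _
    have hxsum : ∑ I : Finset (Fin k), ((x I : (∀ i, Z i) → V)) = 0 := by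
      rw [← h1, hx]
    have hz := decomposition_unique (fun I => (x I).2) hxsum
    apply DFinsupp.ext
    intro I
    exact Subtype.ext (hz I)
  · -- surjective
    intro w
    obtain ⟨f, ⟨hmem, hsum⟩, -⟩ := huniq w
    refine ⟨∑ I : Finset (Fin k),
      DirectSum.of (fun I : Finset (Fin k) => ↥(pureInteraction Z V I)) I ⟨f I, hmem I⟩, ?_⟩
    rw [map_sum, hsum]
    exact Finset.sum_congr rfl fun I _ => DirectSum.coeAddMonoidHom_of _ _ _
end

section
/- For every I ⊆ {1,…,k}, the dimension of the pure interaction space E_I equals dim(V) · ∏_{i ∈ I} (|Z_i| − 1). -/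
open Finset

namespace PureInteractionAux

variable {k : ℕ} {Z : Fin k → Type*} [∀ i, Fintype (Z i)] [∀ i, Nonempty (Z i)]
  [∀ i, DecidableEq (Z i)] {V : Type*} [AddCommGroup V] [Module ℝ V]

/-- the filter over constrained tuples is a `piFinset` -/
lemma filter_eq_piFinset (J : Finset (Fin k)) (z : ∀ i, Z i) :
    Finset.univ.filter (fun z' : ∀ i, Z i => ∀ i ∈ J, z' i = z i)
      = Fintype.piFinset (fun i => if i ∈ J then ({z i} : Finset (Z i)) else Finset.univ) := by
  ext x
  simp only [mem_filter, mem_univ, true_and, Fintype.mem_piFinset]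
  constructor
  · intro h i
    by_cases hi : i ∈ J
    · simp [hi, h i hi]
    · simp [hi]
  · intro h i hi
    have := h i
    simpa [hi] using this

lemma master_sum (J : Finset (Fin k)) (z : ∀ i, Z i) (f : ∀ i, Z i → ℝ) :
    ∑ z' ∈ Finset.univ.filter (fun z' : ∀ i, Z i => ∀ i ∈ J, z' i = z i), ∏ i, f i (z' i)
      = ∏ i, (if i ∈ J then f i (z i) else ∑ t, f i t) := by
  rw [filter_eq_piFinset, ← Finset.prod_univ_sum]
  refine Finset.prod_congr rfl fun i _ => ?_
  by_cases hi : i ∈ J <;> simp [hi]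

lemma card_filter_eq (J : Finset (Fin k)) (z : ∀ i, Z i) :
    (Finset.univ.filter (fun z' : ∀ i, Z i => ∀ i ∈ J, z' i = z i)).card
      = ∏ i ∈ Jᶜ, Fintype.card (Z i) := by
  rw [filter_eq_piFinset, Fintype.card_piFinset, ← Finset.prod_mul_prod_compl J]
  have h1 : (∏ i ∈ J, ((if i ∈ J then ({z i} : Finset (Z i)) else Finset.univ)).card) = 1 :=
    Finset.prod_eq_one fun i hi => by simp [hi]
  have h2 : (∏ i ∈ Jᶜ, ((if i ∈ J then ({z i} : Finset (Z i)) else Finset.univ)).card)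
      = ∏ i ∈ Jᶜ, Fintype.card (Z i) :=
    Finset.prod_congr rfl fun i hi => by simp [Finset.mem_compl.mp hi]
  rw [h1, h2, one_mul]

variable (Z) in
/-- fixed base point -/
noncomputable def z0 : ∀ i, Z i := fun _ => Classical.arbitrary _

variable (Z) in
/-- difference of indicators: `[t = a] - [t = z0 i]` -/
noncomputable def chi (i : Fin k) (a t : Z i) : ℝ :=
  (if t = a then 1 else 0) - (if t = z0 Z i then 1 else 0)

lemma chi_sum (i : Fin k) (a : Z i) : ∑ t, chi Z i a t = 0 := by
  simp [chi, Finset.sum_sub_distrib]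

variable (Z) in
/-- elements different from the base point -/
def Zne (i : Fin k) := {t : Z i // t ≠ z0 Z i}

noncomputable instance (i : Fin k) : Fintype (Zne Z i) := by unfold Zne; infer_instance
instance (i : Fin k) : DecidableEq (Zne Z i) := by unfold Zne; infer_instance

lemma card_Zne (i : Fin k) : Fintype.card (Zne Z i) = Fintype.card (Z i) - 1 := by
  rw [show Fintype.card (Zne Z i) = Fintype.card {t : Z i // ¬ (t = z0 Z i)} from rfl,
    Fintype.card_subtype_compl, Fintype.card_subtype_eq]

variable (Z) in
/-- extension by base points -/
noncomputable def extc (I : Finset (Fin k)) (a : ∀ i : I, Zne Z i) : ∀ i, Z i :=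
  fun i => if h : i ∈ I then (a ⟨i, h⟩).1 else z0 Z i

lemma extc_mem {I : Finset (Fin k)} (a : ∀ i : I, Zne Z i) (i : I) :
    extc Z I a i.1 = (a i).1 := dif_pos i.2

variable (Z V) in
/-- candidate inverse map -/
noncomputable def Psi (I : Finset (Fin k)) (g : (∀ i : I, Zne Z i) → V) : (∀ i, Z i) → V :=
  fun z => ∑ a : ∀ i : I, Zne Z i,
    (∏ i ∈ I.attach, chi Z i.1 ((a i).1) (z i.1)) • g a

variable (Z) in
/-- globalized coefficient family -/
noncomputable def Ff (I : Finset (Fin k)) (a : ∀ i : I, Zne Z i) (i : Fin k) (t : Z i) : ℝ :=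
  if h : i ∈ I then chi Z i ((a ⟨i, h⟩).1) t else 1

lemma prod_Ff (I : Finset (Fin k)) (a : ∀ i : I, Zne Z i) (z : ∀ i, Z i) :
    ∏ i, Ff Z I a i (z i) = ∏ i ∈ I.attach, chi Z i.1 ((a i).1) (z i.1) := by
  rw [← Finset.prod_mul_prod_compl I (fun i => Ff Z I a i (z i))]
  have h2 : (∏ i ∈ Iᶜ, Ff Z I a i (z i)) = 1 :=
    Finset.prod_eq_one fun i hi => dif_neg (Finset.mem_compl.mp hi)
  rw [h2, mul_one, ← Finset.prod_attach I (fun i => Ff Z I a i (z i))]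
  exact Finset.prod_congr rfl fun i _ => dif_pos i.2

lemma Psi_mem (I : Finset (Fin k)) (g : (∀ i : I, Zne Z i) → V) :
    Psi Z V I g ∈ pureInteraction Z V I := by
  constructor
  · intro z z' h
    unfold Psi
    refine Finset.sum_congr rfl fun a _ => ?_
    congr 1
    exact Finset.prod_congr rfl fun i _ => by rw [h i.1 i.2]
  · intro J hJ z
    unfold Psi
    rw [Finset.sum_comm]
    refine Finset.sum_eq_zero fun a _ => ?_
    rw [← Finset.sum_smul]
    have key : (∑ z' ∈ Finset.univ.filter (fun z' : ∀ i, Z i => ∀ i ∈ J, z' i = z i),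
        ∏ i ∈ I.attach, chi Z i.1 ((a i).1) (z' i.1)) = 0 := by
      have : (∑ z' ∈ Finset.univ.filter (fun z' : ∀ i, Z i => ∀ i ∈ J, z' i = z i),
          ∏ i ∈ I.attach, chi Z i.1 ((a i).1) (z' i.1))
          = ∑ z' ∈ Finset.univ.filter (fun z' : ∀ i, Z i => ∀ i ∈ J, z' i = z i),
            ∏ i, Ff Z I a i (z' i) :=
        Finset.sum_congr rfl fun z' _ => (prod_Ff I a z').symm
      rw [this, master_sum]
      obtain ⟨i₀, hi₀I, hi₀J⟩ := Finset.exists_of_ssubset hJ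
      refine Finset.prod_eq_zero (Finset.mem_univ i₀) ?_
      rw [if_neg hi₀J]
      calc ∑ t, Ff Z I a i₀ t = ∑ t, chi Z i₀ ((a ⟨i₀, hi₀I⟩).1) t :=
            Finset.sum_congr rfl fun t _ => dif_pos hi₀I
        _ = 0 := chi_sum i₀ _
    refine smul_eq_zero_of_left ?_ (g a)
    convert key using 2
    exact (Finset.filter_congr_decidable _ _ _).trans (Finset.filter_congr_decidable _ _ _).symm

lemma Phi_Psi (I : Finset (Fin k)) (g : (∀ i : I, Zne Z i) → V) :
    (fun a => Psi Z V I g (extc Z I a)) = g := by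
  funext a
  unfold Psi
  rw [Finset.sum_eq_single a]
  · have h1 : (∏ i ∈ I.attach, chi Z i.1 ((a i).1) (extc Z I a i.1)) = 1 := by
      refine Finset.prod_eq_one fun i _ => ?_
      rw [extc_mem a i]
      simp [chi, (a i).2]
    rw [h1, one_smul]
  · intro b _ hba
    obtain ⟨i, hi⟩ := Function.ne_iff.mp hba
    refine smul_eq_zero_of_left (Finset.prod_eq_zero (Finset.mem_attach I i) ?_) _
    rw [extc_mem a i]
    have h1 : ¬ ((a i).1 = (b i).1) := fun hc => hi (Subtype.ext hc.symm)
    simp [chi, h1, (a i).2]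
  · intro h; exact absurd (Finset.mem_univ a) h

lemma eq_zero_of_vanish {I : Finset (Fin k)} {w : (∀ i, Z i) → V}
    (hw : w ∈ pureInteraction Z V I)
    (h0 : ∀ a : ∀ i : I, Zne Z i, w (extc Z I a) = 0) : w = 0 := by
  obtain ⟨h1, h2⟩ := hw
  funext z
  suffices H : ∀ n, ∀ z : ∀ i, Z i, (I.filter fun i => z i = z0 Z i).card = n → w z = 0 from
    H _ z rfl
  intro n
  induction n using Nat.strong_induction_on with
  | _ n IH =>
    intro z hz
    rcases Nat.eq_zero_or_pos n with h | h
    · subst h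
      have hfil : ∀ i (hi : i ∈ I), z i ≠ z0 Z i := by
        intro i hi hcontra
        have hmem : i ∈ I.filter fun i => z i = z0 Z i := Finset.mem_filter.2 ⟨hi, hcontra⟩
        rw [Finset.card_eq_zero.mp hz] at hmem
        exact absurd hmem (Finset.notMem_empty i)
      set a : ∀ i : I, Zne Z i := fun i => ⟨z i.1, hfil i.1 i.2⟩ with ha
      have heq : w z = w (extc Z I a) := by
        refine h1 z _ fun i hi => ?_
        rw [show extc Z I a i = (a ⟨i, hi⟩).1 from dif_pos hi, ha]
      rw [heq, h0 a]
    · have hne : (I.filter fun i => z i = z0 Z i).Nonempty := by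
        rw [← Finset.card_pos, hz]; exact h
      obtain ⟨i₀, hi₀⟩ := hne
      have hi₀I : i₀ ∈ I := (Finset.mem_filter.mp hi₀).1
      have hi₀z : z i₀ = z0 Z i₀ := (Finset.mem_filter.mp hi₀).2
      have hJ : I.erase i₀ ⊂ I := Finset.erase_ssubset hi₀I
      have hsum := h2 (I.erase i₀) hJ z
      set s := Finset.univ.filter (fun z' : ∀ i, Z i => ∀ j ∈ I.erase i₀, z' j = z j) with hs
      replace hsum : ∑ z' ∈ s, w z' = 0 := by
        rw [hs]; convert hsum using 2
        exact (Finset.filter_congr_decidable _ _ _).trans (Finset.filter_congr_decidable _ _ _).symm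
      have hrw : ∀ z' ∈ s, w z' = w (Function.update z i₀ (z' i₀)) := by
        intro z' hz'
        refine h1 z' _ fun j hjI => ?_
        by_cases hj : j = i₀
        · subst hj; simp
        · rw [Function.update_of_ne hj]
          exact (Finset.mem_filter.mp hz').2 j (Finset.mem_erase.2 ⟨hj, hjI⟩)
      rw [Finset.sum_congr rfl hrw] at hsum
      rw [← Finset.sum_fiberwise s (fun z' => z' i₀)
        (fun z' => w (Function.update z i₀ (z' i₀)))] at hsum
      set c : ℕ := ∏ j ∈ Iᶜ, Fintype.card (Z j) with hc
      have inner_eq : ∀ t : Z i₀,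
          (∑ z' ∈ s.filter (fun z' => z' i₀ = t), w (Function.update z i₀ (z' i₀)))
            = (c : ℝ) • w (Function.update z i₀ t) := by
        intro t
        have hcong : ∀ z' ∈ s.filter (fun z' => z' i₀ = t),
            w (Function.update z i₀ (z' i₀)) = w (Function.update z i₀ t) := by
          intro z' hz'
          rw [(Finset.mem_filter.mp hz').2]
        rw [Finset.sum_congr rfl hcong, Finset.sum_const]
        have hset : s.filter (fun z' => z' i₀ = t)
            = Finset.univ.filter (fun z' : ∀ i, Z i => ∀ j ∈ I, z' j = Function.update z i₀ t j) := by
          ext z'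
          simp only [hs, Finset.mem_filter, Finset.mem_univ, true_and]
          constructor
          · rintro ⟨hzJ, hzt⟩ j hj
            by_cases hji : j = i₀
            · subst hji; simpa using hzt
            · rw [Function.update_of_ne hji]
              exact hzJ j (Finset.mem_erase.2 ⟨hji, hj⟩)
          · intro hall
            refine ⟨fun j hj => ?_, ?_⟩
            · have := hall j (Finset.mem_erase.mp hj).2
              rwa [Function.update_of_ne (Finset.mem_erase.mp hj).1] at this
            · simpa using hall i₀ hi₀I
        rw [hset, card_filter_eq, Nat.cast_smul_eq_nsmul]
      rw [Finset.sum_congr rfl (fun t _ => inner_eq t), ← Finset.smul_sum] at hsum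
      have hcpos : (0 : ℝ) < c := by
        rw [hc]; push_cast
        exact Finset.prod_pos fun j _ => by exact_mod_cast Fintype.card_pos
      have hFsum : ∑ t, w (Function.update z i₀ t) = 0 := by
        rcases smul_eq_zero.mp hsum with h' | h'
        · exact absurd h' (ne_of_gt hcpos)
        · exact h'
      have hothers : ∀ t : Z i₀, t ≠ z i₀ → w (Function.update z i₀ t) = 0 := by
        intro t ht
        have hfe : (I.filter fun j => Function.update z i₀ t j = z0 Z j)
            = (I.filter fun j => z j = z0 Z j).erase i₀ := by
          ext j
          simp only [Finset.mem_filter, Finset.mem_erase]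
          constructor
          · rintro ⟨hjI, hj0⟩
            have hji : j ≠ i₀ := by
              rintro rfl
              rw [Function.update_self] at hj0
              exact ht (hj0.trans hi₀z.symm)
            rw [Function.update_of_ne hji] at hj0
            exact ⟨hji, hjI, hj0⟩
          · rintro ⟨hji, hjI, hj0⟩
            rw [Function.update_of_ne hji]
            exact ⟨hjI, hj0⟩
        refine IH (n - 1) (Nat.sub_lt h one_pos) _ ?_
        rw [hfe, Finset.card_erase_of_mem hi₀, hz]
      have : (∑ t, w (Function.update z i₀ t)) = w (Function.update z i₀ (z i₀)) :=
        Finset.sum_eq_single_of_mem (z i₀) (Finset.mem_univ _) fun t _ ht => hothers t ht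
      rw [this, Function.update_eq_self] at hFsum
      exact hFsum

variable (Z V) in
noncomputable def theEquiv (I : Finset (Fin k)) :
    (pureInteraction Z V I) ≃ₗ[ℝ] ((∀ i : I, Zne Z i) → V) :=
  LinearEquiv.ofBijective
    { toFun := fun w a => w.1 (extc Z I a)
      map_add' := fun u v => rfl
      map_smul' := fun c u => rfl }
    ⟨by
      intro u v huv
      apply Subtype.ext
      have hsub : (u : (∀ i, Z i) → V) - v ∈ pureInteraction Z V I := sub_mem u.2 v.2
      have h0 : ∀ a : ∀ i : I, Zne Z i, ((u : (∀ i, Z i) → V) - v) (extc Z I a) = 0 := by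
        intro a
        have := congrFun huv a
        simp only [Pi.sub_apply]
        rw [sub_eq_zero]
        exact this
      have := eq_zero_of_vanish hsub h0
      exact sub_eq_zero.mp this,
     fun g => ⟨⟨Psi Z V I g, Psi_mem I g⟩, Phi_Psi I g⟩⟩

end PureInteractionAux

/-- `dim E_I = dim V · ∏_{i ∈ I} (|Z_i| − 1)`. -/
theorem finrank_pureInteraction {k : ℕ} (hk : 1 ≤ k) (Z : Fin k → Type*)
    [∀ i, Fintype (Z i)] [∀ i, Nonempty (Z i)] [∀ i, DecidableEq (Z i)]
    (V : Type*) [AddCommGroup V] [Module ℝ V] [FiniteDimensional ℝ V]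
    (I : Finset (Fin k)) :
    Module.finrank ℝ (pureInteraction Z V I) =
      Module.finrank ℝ V * ∏ i ∈ I, (Fintype.card (Z i) - 1) := by
  classical
  rw [LinearEquiv.finrank_eq (PureInteractionAux.theEquiv Z V I)]
  rw [Module.finrank_pi_fintype ℝ, Finset.sum_const, smul_eq_mul, Finset.card_univ, Fintype.card_pi]
  have hcard : (∏ i : I, Fintype.card (PureInteractionAux.Zne Z i.1))
      = ∏ i ∈ I, (Fintype.card (Z i) - 1) := by
    rw [← Finset.prod_coe_sort I (fun i => Fintype.card (Z i) - 1)]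
    exact Finset.prod_congr rfl fun i _ => PureInteractionAux.card_Zne i.1
  rw [hcard, Nat.mul_comm]
end

section
/- For any two distinct subsets J, J' ⊆ {1,…,k}, the composition Q_J ∘ Q_{J'} = 0 as an operator on maps Z → V. -/
open Finset

section Aux
set_option linter.unusedSectionVars false
variable {ι : Type*} [Fintype ι] [DecidableEq ι] {Z : ι → Type*} [∀ i, Fintype (Z i)]
    [∀ i, DecidableEq (Z i)] {V : Type*} [AddCommGroup V] [Module ℝ V]

lemma card_filter_fix (S : Finset ι) (t : ∀ i, Z i) :
    (Finset.univ.filter (fun z' : ∀ i, Z i => ∀ i ∈ S, z' i = t i)).card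
      = ∏ i ∈ Sᶜ, Fintype.card (Z i) := by
  have h : Finset.univ.filter (fun z' : ∀ i, Z i => ∀ i ∈ S, z' i = t i)
      = Fintype.piFinset (fun i => if i ∈ S then {t i} else Finset.univ) := by
    ext z'
    simp only [mem_filter, mem_univ, true_and, Fintype.mem_piFinset]
    constructor
    · intro h i
      by_cases hi : i ∈ S <;> simp [hi, h]
    · intro h i hi
      have := h i
      simpa [hi] using this
  rw [h, Fintype.card_piFinset, ← Finset.prod_mul_prod_compl S]
  have h1 : ∏ i ∈ S, (if i ∈ S then ({t i} : Finset (Z i)) else Finset.univ).card = 1 :=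
    Finset.prod_eq_one (fun i hi => by simp [hi])
  rw [h1, one_mul]
  exact Finset.prod_congr rfl (fun i hi => by
    simp [Finset.mem_compl.mp hi, Finset.card_univ])


lemma piAvg_comp [∀ i, Nonempty (Z i)] (A B : Finset ι) (w : (∀ i, Z i) → V) :
    piAvg A (piAvg B w) = piAvg (A ∩ B) w := by
  funext z
  simp only [piAvg]
  rw [← Finset.smul_sum, smul_smul]
  have key : ∑ z' ∈ Finset.univ.filter (fun z' : ∀ i, Z i => ∀ i ∈ A, z' i = z i),
        ∑ z'' ∈ Finset.univ.filter (fun z'' : ∀ i, Z i => ∀ i ∈ B, z'' i = z' i), w z''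
      = (∏ i ∈ (A ∪ B)ᶜ, Fintype.card (Z i)) •
        ∑ z'' ∈ Finset.univ.filter (fun z'' : ∀ i, Z i => ∀ i ∈ A ∩ B, z'' i = z i), w z'' := by
    calc ∑ z' ∈ Finset.univ.filter (fun z' : ∀ i, Z i => ∀ i ∈ A, z' i = z i),
          ∑ z'' ∈ Finset.univ.filter (fun z'' : ∀ i, Z i => ∀ i ∈ B, z'' i = z' i), w z''
        = ∑ z' ∈ Finset.univ.filter (fun z' : ∀ i, Z i => ∀ i ∈ A, z' i = z i),
          ∑ z'' : ∀ i, Z i, if (∀ i ∈ B, z'' i = z' i) then w z'' else 0 := by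
          exact Finset.sum_congr rfl fun z' _ => (Finset.sum_filter _ _)
      _ = ∑ z'' : ∀ i, Z i, ∑ z' ∈ Finset.univ.filter (fun z' : ∀ i, Z i => ∀ i ∈ A, z' i = z i),
          if (∀ i ∈ B, z'' i = z' i) then w z'' else 0 := Finset.sum_comm
      _ = ∑ z'' : ∀ i, Z i,
          ((Finset.univ.filter (fun z' : ∀ i, Z i => ∀ i ∈ A, z' i = z i)).filter
            (fun z' => ∀ i ∈ B, z'' i = z' i)).card • w z'' := by
          exact Finset.sum_congr rfl fun z'' _ => by
            rw [← Finset.sum_filter, Finset.sum_const]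
      _ = ∑ z'' : ∀ i, Z i, if (∀ i ∈ A ∩ B, z'' i = z i)
            then (∏ i ∈ (A ∪ B)ᶜ, Fintype.card (Z i)) • w z'' else 0 := by
          refine Finset.sum_congr rfl fun z'' _ => ?_
          rw [Finset.filter_filter]
          by_cases hc : ∀ i ∈ A ∩ B, z'' i = z i
          · rw [if_pos hc]
            have hset : Finset.univ.filter
                (fun z' : ∀ i, Z i => (∀ i ∈ A, z' i = z i) ∧ ∀ i ∈ B, z'' i = z' i)
                = Finset.univ.filter (fun z' : ∀ i, Z i => ∀ i ∈ A ∪ B,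
                    z' i = if i ∈ A then z i else z'' i) := by
              ext z'
              simp only [mem_filter, mem_univ, true_and]
              constructor
              · rintro ⟨h1, h2⟩ i hi
                by_cases hiA : i ∈ A
                · simp [hiA, h1 i hiA]
                · have hiB : i ∈ B := by
                    rcases Finset.mem_union.mp hi with h | h
                    · exact absurd h hiA
                    · exact h
                  simp [hiA, (h2 i hiB).symm]
              · intro h
                constructor
                · intro i hiA
                  have := h i (Finset.mem_union_left _ hiA)
                  simpa [hiA] using this
                · intro i hiB
                  by_cases hiA : i ∈ A
                  · have := hc i (Finset.mem_inter.mpr ⟨hiA, hiB⟩)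
                    have h2 := h i (Finset.mem_union_left _ hiA)
                    simp only [hiA, if_true] at h2
                    rw [this, h2]
                  · have h2 := h i (Finset.mem_union_right _ hiB)
                    simp only [hiA, if_false] at h2
                    rw [h2]
            rw [hset, card_filter_fix]
          · rw [if_neg hc]
            obtain ⟨i, hiAB, hne⟩ := by
              push_neg at hc; exact hc
            have : Finset.univ.filter
                (fun z' : ∀ i, Z i => (∀ i ∈ A, z' i = z i) ∧ ∀ i ∈ B, z'' i = z' i) = ∅ := by
              refine Finset.filter_eq_empty_iff.mpr fun z' _ => ?_
              rintro ⟨h1, h2⟩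
              exact hne ((h2 i (Finset.mem_inter.mp hiAB).2).trans (h1 i (Finset.mem_inter.mp hiAB).1))
            rw [this]; simp
      _ = ∑ z'' ∈ Finset.univ.filter (fun z'' : ∀ i, Z i => ∀ i ∈ A ∩ B, z'' i = z i),
            (∏ i ∈ (A ∪ B)ᶜ, Fintype.card (Z i)) • w z'' := (Finset.sum_filter _ _).symm
      _ = _ := by rw [← Finset.smul_sum]
  rw [key, ← Nat.cast_smul_eq_nsmul ℝ, smul_smul]
  congr 1
  push_cast
  have hA : (0:ℝ) < ∏ i ∈ Aᶜ, (Fintype.card (Z i) : ℝ) :=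
    Finset.prod_pos fun i _ => by exact_mod_cast Fintype.card_pos
  have hB : (0:ℝ) < ∏ i ∈ Bᶜ, (Fintype.card (Z i) : ℝ) :=
    Finset.prod_pos fun i _ => by exact_mod_cast Fintype.card_pos
  have hAB : (0:ℝ) < ∏ i ∈ (A ∩ B)ᶜ, (Fintype.card (Z i) : ℝ) :=
    Finset.prod_pos fun i _ => by exact_mod_cast Fintype.card_pos
  rw [Finset.compl_union, Finset.compl_inter]
  have hrel := Finset.prod_union_inter (s₁ := Aᶜ) (s₂ := Bᶜ)
    (f := fun i => (Fintype.card (Z i) : ℝ))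
  field_simp
  linear_combination hrel

lemma piAvg_smul (A : Finset ι) (c : ℝ) (w : (∀ i, Z i) → V) :
    piAvg A (c • w) = c • piAvg A w := by
  funext z
  simp only [piAvg, Pi.smul_apply, ← Finset.smul_sum, smul_comm c]

lemma piAvg_sum {α : Type*} (A : Finset ι) (s : Finset α) (f : α → (∀ i, Z i) → V) :
    piAvg A (∑ x ∈ s, f x) = ∑ x ∈ s, piAvg A (f x) := by
  funext z
  simp only [piAvg, Finset.sum_apply]
  rw [Finset.sum_comm, ← Finset.smul_sum]

lemma sum_powerset_cancel {M : Type*} [AddCommGroup M] (T : Finset ι) (i : ι) (hi : i ∈ T)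
    (f : Finset ι → M) (hf : ∀ A ⊆ T, i ∉ A → f (insert i A) = - f A) :
    ∑ A ∈ T.powerset, f A = 0 := by
  refine Finset.sum_involution
    (fun A _ => if i ∈ A then A.erase i else insert i A) ?_ ?_ ?_ ?_
  · intro A hA
    by_cases h : i ∈ A
    · simp only [h, if_true]
      have hsub : A.erase i ⊆ T := (Finset.erase_subset _ _).trans (Finset.mem_powerset.mp hA)
      have := hf _ hsub (Finset.notMem_erase _ _)
      rw [Finset.insert_erase h] at this
      rw [this]; abel
    · simp only [h, if_false]
      rw [hf A (Finset.mem_powerset.mp hA) h]; abel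
  · intro A _ _
    by_cases h : i ∈ A
    · simp only [h, if_true]
      exact fun hc => (Finset.erase_eq_self.mp hc) h
    · simp only [h, if_false]
      exact fun hc => h (Finset.insert_eq_self.mp hc)
  · intro A hA
    by_cases h : i ∈ A
    · simp only [h, if_true]
      exact Finset.mem_powerset.mpr ((Finset.erase_subset _ _).trans (Finset.mem_powerset.mp hA))
    · simp only [h, if_false]
      exact Finset.mem_powerset.mpr (Finset.insert_subset hi (Finset.mem_powerset.mp hA))
  · intro A _
    by_cases h : i ∈ A
    · simp [h, Finset.notMem_erase, Finset.insert_erase h]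
    · simp [h, Finset.erase_insert h]

lemma neg_one_pow_sdiff_insert (T A : Finset ι) (i : ι) (hi : i ∈ T) (hAT : A ⊆ T) (hiA : i ∉ A) :
    ((-1 : ℝ) ^ (T \ insert i A).card) = -((-1 : ℝ) ^ (T \ A).card) := by
  have h1 : T \ A = insert i (T \ insert i A) := by
    ext j
    simp only [Finset.mem_sdiff, Finset.mem_insert]
    constructor
    · rintro ⟨hjT, hjA⟩
      by_cases hj : j = i
      · exact Or.inl hj
      · exact Or.inr ⟨hjT, by simp [hj, hjA]⟩
    · rintro (rfl | ⟨hjT, hj⟩)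
      · exact ⟨hi, hiA⟩
      · exact ⟨hjT, fun h => hj (Or.inr h)⟩
  have h2 : i ∉ T \ insert i A := by simp
  rw [h1, Finset.card_insert_of_notMem h2, pow_succ]
  ring

end Aux

/-- for distinct `J, J'`, `Q_J ∘ Q_{J'} = 0`. -/
theorem Qop_comp_Qop_eq_zero {k : ℕ} (hk : 1 ≤ k) (Z : Fin k → Type*)
    [∀ i, Fintype (Z i)] [∀ i, Nonempty (Z i)] [∀ i, DecidableEq (Z i)]
    (V : Type*) [AddCommGroup V] [Module ℝ V] [FiniteDimensional ℝ V]
    (J J' : Finset (Fin k)) (hne : J ≠ J') :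
    ∀ w : (∀ i, Z i) → V, Qop J (Qop J' w) = 0 := by
  intro w
  have hexp : Qop J (Qop J' w) = ∑ A ∈ J.powerset, ∑ B ∈ J'.powerset,
      (((-1:ℝ) ^ (J \ A).card) * ((-1:ℝ) ^ (J' \ B).card)) • piAvg (A ∩ B) w := by
    simp only [Qop]
    refine Finset.sum_congr rfl fun A _ => ?_
    rw [piAvg_sum, Finset.smul_sum]
    refine Finset.sum_congr rfl fun B _ => ?_
    rw [piAvg_smul, piAvg_comp, smul_smul]
  have hex : ∃ i, (i ∈ J ∧ i ∉ J') ∨ (i ∈ J' ∧ i ∉ J) := by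
    by_contra h
    push_neg at h
    apply hne
    ext i
    have := h i
    tauto
  obtain ⟨i, ⟨hiJ, hiJ'⟩ | ⟨hiJ', hiJ⟩⟩ := hex
  · rw [hexp, Finset.sum_comm]
    refine Finset.sum_eq_zero fun B hB => ?_
    refine sum_powerset_cancel J i hiJ _ fun A hA hiA => ?_
    have hiB : i ∉ B := fun h => hiJ' (Finset.mem_powerset.mp hB h)
    rw [Finset.insert_inter_of_notMem hiB, neg_one_pow_sdiff_insert J A i hiJ hA hiA,
      neg_mul, neg_smul]
  · rw [hexp]
    refine Finset.sum_eq_zero fun A hA => ?_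
    refine sum_powerset_cancel J' i hiJ' _ fun B hB hiB => ?_
    have hiA : i ∉ A := fun h => hiJ (Finset.mem_powerset.mp hA h)
    rw [Finset.inter_insert_of_notMem hiA, neg_one_pow_sdiff_insert J' B i hiJ' hB hiB,
      mul_neg, neg_smul]
end

section
/- Let P : X × Y → ℝ be strictly positive with ∑_{y ∈ Y} P(x, y) = 1 for every x ∈ X, and let A, B, C be a partition of the m + n coordinate indices of X × Y; for z = (x, y) write z_A, z_B, z_C for the corresponding subtuples. The following are equivalent: (i) there exists a strictly positive probability density p on X such that the joint density q(x, y) := P(x, y) · p(x) satisfies q(z) · q_C(z_C) = q_{A∪C}(z_A, z_C) · q_{B∪C}(z_B, z_C) for all z, where the subscripted q's denote marginal densities of q; (ii) there exist functions f on the (A∪C)-subtuples, g on the (B∪C)-subtuples, and a strictly positive h : X → ℝ such that P(x, y) = f(z_A, z_C) · g(z_B, z_C) · h(x) for all (x, y). -/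
open Finset
open scoped RealInnerProductSpace

universe u

/-- Combined family of factors, indexed by `Fin m ⊕ Fin n`. -/
def sumFam {m n : ℕ} (X : Fin m → Type u) (Y : Fin n → Type u) : Fin m ⊕ Fin n → Type u :=
  Sum.elim X Y

instance sumFam.fintype {m n : ℕ} (X : Fin m → Type u) (Y : Fin n → Type u)
    [∀ i, Fintype (X i)] [∀ j, Fintype (Y j)] : ∀ s, Fintype (sumFam X Y s)
  | .inl i => inferInstanceAs (Fintype (X i))
  | .inr j => inferInstanceAs (Fintype (Y j))

instance sumFam.decEq {m n : ℕ} (X : Fin m → Type u) (Y : Fin n → Type u)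
    [∀ i, DecidableEq (X i)] [∀ j, DecidableEq (Y j)] : ∀ s, DecidableEq (sumFam X Y s)
  | .inl i => inferInstanceAs (DecidableEq (X i))
  | .inr j => inferInstanceAs (DecidableEq (Y j))

instance sumFam.nonempty {m n : ℕ} (X : Fin m → Type u) (Y : Fin n → Type u)
    [∀ i, Nonempty (X i)] [∀ j, Nonempty (Y j)] : ∀ s, Nonempty (sumFam X Y s)
  | .inl i => inferInstanceAs (Nonempty (X i))
  | .inr j => inferInstanceAs (Nonempty (Y j))

/-- A pair `(x, y)` of tuples viewed as a single tuple indexed by `Fin m ⊕ Fin n`. -/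
def glue {m n : ℕ} {X : Fin m → Type u} {Y : Fin n → Type u}
    (x : ∀ i, X i) (y : ∀ j, Y j) : ∀ s, sumFam X Y s
  | .inl i => x i
  | .inr j => y j

/-- First projection of a combined tuple. -/
def projX {m n : ℕ} {X : Fin m → Type u} {Y : Fin n → Type u}
    (z : ∀ s, sumFam X Y s) : ∀ i, X i := fun i => z (.inl i)

/-- Second projection of a combined tuple. -/
def projY {m n : ℕ} {X : Fin m → Type u} {Y : Fin n → Type u}
    (z : ∀ s, sumFam X Y s) : ∀ j, Y j := fun j => z (.inr j)

/-- The marginal density of `q` on the coordinates in `S`, viewed as a function of the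
full tuple (depending only on the `S`-coordinates). -/
def marg {ι : Type*} [Fintype ι] [DecidableEq ι] {Z : ι → Type*} [∀ i, Fintype (Z i)]
    [∀ i, DecidableEq (Z i)] (S : Finset ι) (q : (∀ i, Z i) → ℝ) (z : ∀ i, Z i) : ℝ :=
  ∑ z' ∈ Finset.univ.filter (fun z' : ∀ i, Z i => ∀ i ∈ S, z' i = z i), q z'

section aux

variable {ι : Type*} [Fintype ι] [DecidableEq ι] {Z : ι → Type*}
  [∀ i, Fintype (Z i)] [∀ i, DecidableEq (Z i)]

lemma marg_congr' (S : Finset ι) (q : (∀ i, Z i) → ℝ) {z z' : ∀ i, Z i}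
    (h : ∀ s ∈ S, z s = z' s) : marg S q z = marg S q z' := by
  unfold marg
  congr 1
  ext w
  simp only [Finset.mem_filter, Finset.mem_univ, true_and]
  exact ⟨fun hw s hs => (hw s hs).trans (h s hs),
    fun hw s hs => (hw s hs).trans (h s hs).symm⟩

lemma marg_pos' (S : Finset ι) {q : (∀ i, Z i) → ℝ} (hq : ∀ z, 0 < q z) (z : ∀ i, Z i) :
    0 < marg S q z :=
  Finset.sum_pos (fun w _ => hq w) ⟨z, by simp⟩

lemma marg_factor (A B C : Finset ι) (hAC : Disjoint A C)
    (hABC : A ∪ B ∪ C = Finset.univ) (hAB : Disjoint A B)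
    (F G : (∀ i, Z i) → ℝ)
    (hF : ∀ z z' : ∀ i, Z i, (∀ s ∈ A ∪ C, z s = z' s) → F z = F z')
    (hG : ∀ z z' : ∀ i, Z i, (∀ s ∈ B ∪ C, z s = z' s) → G z = G z')
    (z : ∀ i, Z i) :
    (F z * G z) * marg C (fun w => F w * G w) z
      = marg (A ∪ C) (fun w => F w * G w) z * marg (B ∪ C) (fun w => F w * G w) z := by
  classical
  have hnA : ∀ s, s ∉ A → s ∈ B ∪ C := by
    intro s hs
    have : s ∈ A ∪ B ∪ C := by rw [hABC]; exact Finset.mem_univ s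
    rcases Finset.mem_union.1 this with h | h
    · rcases Finset.mem_union.1 h with h | h
      · exact absurd h hs
      · exact Finset.mem_union_left _ h
    · exact Finset.mem_union_right _ h
  have hCA : ∀ s ∈ C, s ∉ A := fun s hs hsa => (Finset.disjoint_left.1 hAC) hsa hs
  have hBA : ∀ s ∈ B, s ∉ A := fun s hs hsa => (Finset.disjoint_left.1 hAB) hsa hs
  have h1 : marg (A ∪ C) (fun w => F w * G w) z = F z * marg (A ∪ C) G z := by
    unfold marg
    rw [Finset.mul_sum]
    refine Finset.sum_congr rfl fun w hw => ?_
    simp only [Finset.mem_filter, Finset.mem_univ, true_and] at hw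
    show F w * G w = F z * G w
    rw [hF w z hw]
  have h2 : marg (B ∪ C) (fun w => F w * G w) z = G z * marg (B ∪ C) F z := by
    unfold marg
    rw [Finset.mul_sum]
    refine Finset.sum_congr rfl fun w hw => ?_
    simp only [Finset.mem_filter, Finset.mem_univ, true_and] at hw
    show F w * G w = G z * F w
    rw [hG w z hw, mul_comm]
  have h3 : marg C (fun w => F w * G w) z = marg (B ∪ C) F z * marg (A ∪ C) G z := by
    unfold marg
    rw [Finset.sum_mul_sum]
    rw [← Finset.sum_product']
    refine Finset.sum_bij'
      (fun w _ => ((fun s => if s ∈ A then w s else z s, fun s => if s ∈ A then z s else w s) :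
        (∀ i, Z i) × (∀ i, Z i)))
      (fun p _ => (fun s => if s ∈ A then p.1 s else p.2 s : ∀ i, Z i))
      ?_ ?_ ?_ ?_ ?_
    · intro w hw
      simp only [Finset.mem_filter, Finset.mem_univ, true_and] at hw ⊢
      rw [Finset.mem_product]
      constructor
      · simp only [Finset.mem_filter, Finset.mem_univ, true_and]
        intro s hs
        rcases Finset.mem_union.1 hs with h | h
        · simp [hBA s h]
        · simp [hCA s h]
      · simp only [Finset.mem_filter, Finset.mem_univ, true_and]
        intro s hs
        rcases Finset.mem_union.1 hs with h | h
        · simp [h]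
        · simp [hCA s h, hw s h]
    · intro p hp
      rw [Finset.mem_product] at hp
      simp only [Finset.mem_filter, Finset.mem_univ, true_and] at hp ⊢
      intro s hs
      simp [hCA s hs, hp.2 s (Finset.mem_union_right _ hs)]
    · intro w hw
      simp only [Finset.mem_filter, Finset.mem_univ, true_and] at hw
      ext s
      by_cases hs : s ∈ A <;> simp [hs]
    · intro p hp
      rw [Finset.mem_product] at hp
      simp only [Finset.mem_filter, Finset.mem_univ, true_and] at hp
      apply Prod.ext
      · ext s
        by_cases hs : s ∈ A
        · simp [hs]
        · simp only [hs, if_false]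
          exact (hp.1 s (hnA s hs)).symm
      · ext s
        by_cases hs : s ∈ A
        · simp only [hs, if_true]
          exact (hp.2 s (Finset.mem_union_left _ hs)).symm
        · simp [hs]
    · intro w hw
      simp only [Finset.mem_filter, Finset.mem_univ, true_and] at hw
      have hFw : F w = F (fun s => if s ∈ A then w s else z s) := by
        apply hF
        intro s hs
        rcases Finset.mem_union.1 hs with h | h
        · simp [h]
        · simp [hCA s h, hw s h]
      have hGw : G w = G (fun s => if s ∈ A then z s else w s) := by
        apply hG
        intro s hs
        rcases Finset.mem_union.1 hs with h | h
        · simp [hBA s h]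
        · simp [hCA s h]
      rw [hFw, hGw]
  rw [h1, h2, h3]
  ring

end aux

/-- conditional independence of a partition `A, B, C` of the coordinates of
`X × Y` with respect to `P(Y|X)` (existence of a positive input density `p` making the
joint `q = P·p` conditionally independent) is equivalent to the factorization
`P(x,y) = f(z_A, z_C) · g(z_B, z_C) · h(x)` with `h` strictly positive. -/
theorem condIndep_iff_factorization {m n : ℕ}
    (X : Fin m → Type u) (Y : Fin n → Type u)
    [∀ i, Fintype (X i)] [∀ i, Nonempty (X i)] [∀ i, DecidableEq (X i)]
    [∀ j, Fintype (Y j)] [∀ j, Nonempty (Y j)] [∀ j, DecidableEq (Y j)]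
    (P : (∀ i, X i) → (∀ j, Y j) → ℝ)
    (hPpos : ∀ x y, 0 < P x y) (hPsum : ∀ x, ∑ y : ∀ j, Y j, P x y = 1)
    (A B C : Finset (Fin m ⊕ Fin n))
    (hAB : Disjoint A B) (hAC : Disjoint A C) (hBC : Disjoint B C)
    (hABC : A ∪ B ∪ C = Finset.univ) :
    (∃ p : (∀ i, X i) → ℝ, (∀ x, 0 < p x) ∧ (∑ x : ∀ i, X i, p x = 1) ∧
      (∀ z : ∀ s, sumFam X Y s,
        (fun z' : ∀ s, sumFam X Y s => P (projX z') (projY z') * p (projX z')) z *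
          marg C (fun z' => P (projX z') (projY z') * p (projX z')) z =
        marg (A ∪ C) (fun z' => P (projX z') (projY z') * p (projX z')) z *
          marg (B ∪ C) (fun z' => P (projX z') (projY z') * p (projX z')) z)) ↔
    (∃ (f g : (∀ s, sumFam X Y s) → ℝ) (h : (∀ i, X i) → ℝ),
      (∀ z z' : ∀ s, sumFam X Y s, (∀ s ∈ A ∪ C, z s = z' s) → f z = f z') ∧
      (∀ z z' : ∀ s, sumFam X Y s, (∀ s ∈ B ∪ C, z s = z' s) → g z = g z') ∧
      (∀ x, 0 < h x) ∧
      (∀ (x : ∀ i, X i) (y : ∀ j, Y j), P x y = f (glue x y) * g (glue x y) * h x)) := by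
  
  constructor
  · rintro ⟨p, hp_pos, hp_sum, hCI⟩
    set q : (∀ s, sumFam X Y s) → ℝ :=
      fun z' => P (projX z') (projY z') * p (projX z') with hq_def
    have hq_pos : ∀ z, 0 < q z := fun z => mul_pos (hPpos _ _) (hp_pos _)
    refine ⟨marg (A ∪ C) q, fun z => marg (B ∪ C) q z / marg C q z,
      fun x => (p x)⁻¹, ?_, ?_, fun x => inv_pos.2 (hp_pos x), ?_⟩
    · intro z z' hzz
      exact marg_congr' _ _ hzz
    · intro z z' hzz
      dsimp only
      rw [marg_congr' (B ∪ C) q hzz,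
        marg_congr' C q (fun s hs => hzz s (Finset.mem_union_right _ hs))]
    · intro x y
      have key : q (glue x y) * marg C q (glue x y)
          = marg (A ∪ C) q (glue x y) * marg (B ∪ C) q (glue x y) := hCI (glue x y)
      have hqg : q (glue x y) = P x y * p x := rfl
      rw [hqg] at key
      have hp0 : p x ≠ 0 := (hp_pos x).ne'
      have hC0 : marg C q (glue x y) ≠ 0 := (marg_pos' C hq_pos (glue x y)).ne'
      field_simp
      linear_combination key
  · rintro ⟨f, g, h, hf, hg, hpos, hfac⟩
    set K : ℝ := ∑ x : ∀ i, X i, (h x)⁻¹ with hK_def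
    have hK : 0 < K :=
      Finset.sum_pos (fun x _ => inv_pos.2 (hpos x)) Finset.univ_nonempty
    refine ⟨fun x => (h x)⁻¹ / K, fun x => div_pos (inv_pos.2 (hpos x)) hK, ?_, ?_⟩
    · rw [← Finset.sum_div, ← hK_def, div_self hK.ne']
    · have hq : (fun z' : ∀ s, sumFam X Y s =>
          P (projX z') (projY z') * ((h (projX z'))⁻¹ / K))
          = fun w => (f w / K) * g w := by
        funext w
        have hglue : glue (projX w) (projY w) = w := by
          funext s; cases s <;> rfl
        rw [hfac (projX w) (projY w), hglue]
        have hh0 : h (projX w) ≠ 0 := (hpos _).ne'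
        field_simp
      intro z
      rw [hq]
      exact marg_factor A B C hAC hABC hAB (fun w => f w / K) g
        (fun z z' hzz => by rw [hf z z' hzz]) hg z
end

section
/- Let w : X × Y → ℝ be defined by w(x, y) = ⟨u(x), v(y)⟩, regarded as a map on the (m + n)-fold product X_1 × ⋯ × X_m × Y_1 × ⋯ × Y_n. Then for every I ⊆ {1,…,m} and J ⊆ {1,…,n}, the (I ⊔ J)-interaction component of w equals the map (x, y) ↦ ⟨(Q_I u)(x), (Q_J v)(y)⟩, i.e., Q_{I⊔J} w = ⟨Q_I u, Q_J v⟩ pointwise. -/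
open Finset
open scoped RealInnerProductSpace

universe u

section Aux

lemma my_compl_disjSum {α β : Type*} [Fintype α] [Fintype β] [DecidableEq α] [DecidableEq β]
    (A : Finset α) (B : Finset β) : (A.disjSum B)ᶜ = Aᶜ.disjSum Bᶜ := by
  ext x; cases x <;> simp

lemma my_sdiff_disjSum {α β : Type*} [DecidableEq α] [DecidableEq β]
    (s s' : Finset α) (t t' : Finset β) :
    (s.disjSum t) \ (s'.disjSum t') = (s \ s').disjSum (t \ t') := by
  ext x; cases x <;> simp

lemma my_forall_disjSum {α β : Type*} {A : Finset α} {B : Finset β} {p : α ⊕ β → Prop} :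
    (∀ s ∈ A.disjSum B, p s) ↔ (∀ i ∈ A, p (Sum.inl i)) ∧ ∀ j ∈ B, p (Sum.inr j) := by
  constructor
  · exact fun h => ⟨fun i hi => h _ (Finset.inl_mem_disjSum.2 hi),
      fun j hj => h _ (Finset.inr_mem_disjSum.2 hj)⟩
  · rintro ⟨h1, h2⟩ (i | j) hs
    · exact h1 i (Finset.inl_mem_disjSum.1 hs)
    · exact h2 j (Finset.inr_mem_disjSum.1 hs)

lemma my_powerset_sum {α β M : Type*} [DecidableEq α] [DecidableEq β] [AddCommMonoid M]
    (I : Finset α) (J : Finset β) (f : Finset (α ⊕ β) → M) :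
    ∑ S ∈ (I.disjSum J).powerset, f S
      = ∑ A ∈ I.powerset, ∑ B ∈ J.powerset, f (A.disjSum B) := by
  rw [← Finset.sum_product']
  refine Finset.sum_nbij' (fun S => (S.toLeft, S.toRight)) (fun p => p.1.disjSum p.2)
    ?_ ?_ ?_ ?_ ?_
  · intro S hS
    rw [Finset.mem_powerset] at hS
    simp only [Finset.mem_product, Finset.mem_powerset]
    constructor <;> intro x hx
    · simpa using hS (Finset.mem_toLeft.1 hx)
    · simpa using hS (Finset.mem_toRight.1 hx)
  · intro p hp
    simp only [Finset.mem_product, Finset.mem_powerset] at hp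
    exact Finset.mem_powerset.2 (Finset.disjSum_mono hp.1 hp.2)
  · intro S _; exact Finset.toLeft_disjSum_toRight
  · intro p _; simp
  · intro S _; rw [Finset.toLeft_disjSum_toRight]

lemma piAvg_inner {m n : ℕ} {X : Fin m → Type u} {Y : Fin n → Type u}
    [∀ i, Fintype (X i)] [∀ i, DecidableEq (X i)]
    [∀ j, Fintype (Y j)] [∀ j, DecidableEq (Y j)]
    {V : Type*} [NormedAddCommGroup V] [InnerProductSpace ℝ V]
    (u : (∀ i, X i) → V) (v : (∀ j, Y j) → V)
    (A : Finset (Fin m)) (B : Finset (Fin n)) (z : ∀ s, sumFam X Y s) :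
    piAvg (A.disjSum B) (fun z' : ∀ s, sumFam X Y s => ⟪u (projX z'), v (projY z')⟫) z
      = ⟪piAvg A u (projX z), piAvg B v (projY z)⟫ := by
  simp only [piAvg]
  rw [real_inner_smul_left, real_inner_smul_right, sum_inner]
  simp only [inner_sum]
  have hc : (∏ s ∈ (A.disjSum B)ᶜ, (Fintype.card (sumFam X Y s) : ℝ))
      = (∏ i ∈ Aᶜ, (Fintype.card (X i) : ℝ)) * ∏ j ∈ Bᶜ, (Fintype.card (Y j) : ℝ) := by
    rw [my_compl_disjSum, Finset.prod_disjSum]; rfl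
  rw [hc, mul_inv]
  have hsum : (∑ z' ∈ Finset.univ.filter
        (fun z' : ∀ s, sumFam X Y s => ∀ s ∈ A.disjSum B, z' s = z s),
        ⟪u (projX z'), v (projY z')⟫)
      = ∑ x' ∈ Finset.univ.filter (fun x' : ∀ i, X i => ∀ i ∈ A, x' i = projX z i),
          ∑ y' ∈ Finset.univ.filter (fun y' : ∀ j, Y j => ∀ j ∈ B, y' j = projY z j),
            ⟪u x', v y'⟫ := by
    rw [← Finset.sum_product', ← Finset.filter_product, Finset.univ_product_univ]
    refine Finset.sum_nbij' (fun z' => (projX z', projY z'))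
      (fun p => (Equiv.sumPiEquivProdPi (sumFam X Y)).symm p) ?_ ?_ ?_ ?_ ?_
    · intro z' hz'
      simp only [Finset.mem_filter, Finset.mem_univ, true_and] at hz' ⊢
      exact my_forall_disjSum.1 hz'
    · intro p hp
      simp only [Finset.mem_filter, Finset.mem_univ, true_and] at hp ⊢
      refine my_forall_disjSum.2 ⟨fun i hi => ?_, fun j hj => ?_⟩
      · exact hp.1 i hi
      · exact hp.2 j hj
    · intro z' _
      ext (i | j) <;> rfl
    · intro p _
      rfl
    · intro z' _
      rfl
  rw [hsum, smul_eq_mul, mul_assoc]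
  congr!

end Aux

/-- for `w(x,y) = ⟨u(x), v(y)⟩` viewed as a map on the `(m+n)`-fold product,
the `(I ⊔ J)`-interaction component of `w` is `(x,y) ↦ ⟨(Q_I u)(x), (Q_J v)(y)⟩`. -/
theorem Qop_inner_eq_inner_Qop {m n : ℕ}
    (X : Fin m → Type u) (Y : Fin n → Type u)
    [∀ i, Fintype (X i)] [∀ i, Nonempty (X i)] [∀ i, DecidableEq (X i)]
    [∀ j, Fintype (Y j)] [∀ j, Nonempty (Y j)] [∀ j, DecidableEq (Y j)]
    (V : Type*) [NormedAddCommGroup V] [InnerProductSpace ℝ V] [FiniteDimensional ℝ V]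
    (u : (∀ i, X i) → V) (v : (∀ j, Y j) → V)
    (I : Finset (Fin m)) (J : Finset (Fin n)) :
    ∀ z : ∀ s, sumFam X Y s,
      Qop (I.disjSum J) (fun z' : ∀ s, sumFam X Y s => ⟪u (projX z'), v (projY z')⟫) z =
        ⟪Qop I u (projX z), Qop J v (projY z)⟫ := by
  intro z
  have hQ : ∀ (K : Finset (Fin m ⊕ Fin n)) (w : (∀ s, sumFam X Y s) → ℝ),
      Qop K w z = ∑ S ∈ K.powerset, ((-1 : ℝ) ^ (K \ S).card) • piAvg S w z := by
    intro K w
    simp [Qop]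
  rw [hQ, my_powerset_sum I J
    (fun S => ((-1 : ℝ) ^ ((I.disjSum J) \ S).card) •
      piAvg S (fun z' : ∀ s, sumFam X Y s => ⟪u (projX z'), v (projY z')⟫) z)]
  simp only [Qop, Finset.sum_apply, Pi.smul_apply, sum_inner, inner_sum,
    real_inner_smul_left, real_inner_smul_right]
  rw [Finset.sum_comm (s := J.powerset) (t := I.powerset)]
  refine Finset.sum_congr rfl fun A hA => ?_
  refine Finset.sum_congr rfl fun B hB => ?_
  rw [my_sdiff_disjSum, Finset.card_disjSum, pow_add, piAvg_inner, smul_eq_mul]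
  ring
end

section
/- Let I, J, K be a partition of {1,…,m} and let Y_0 ⊆ Y satisfy Span{v(y) − v(y') : y, y' ∈ Y_0} = V. If there exist functions f(y, x_I, x_K), g(y, x_J, x_K) and h(x) such that P(y|x) = f(y, x_I, x_K) · g(y, x_J, x_K) · h(x) for all x ∈ X and all y ∈ Y_0, then u_H = 0 for every H ⊆ {1,…,m} with H ∩ I ≠ ∅ and H ∩ J ≠ ∅; consequently the same factorization (with possibly different f, g, h) holds for all x ∈ X and all y ∈ Y. -/
open Finset
open scoped RealInnerProductSpace

section Aux
variable {ι : Type*} [Fintype ι] [DecidableEq ι] {Z : ι → Type*}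
    [∀ i, Fintype (Z i)] [∀ i, Nonempty (Z i)] [∀ i, DecidableEq (Z i)]
    {V : Type*} [AddCommGroup V] [Module ℝ V]

/-- `w` depends only on coordinates in `S`. -/
def DepOn (S : Finset ι) (w : (∀ i, Z i) → V) : Prop :=
  ∀ x x' : ∀ i, Z i, (∀ i ∈ S, x i = x' i) → w x = w x'

lemma piAvg_insert {j : ι} {J : Finset ι} (hjJ : j ∉ J) {S : Finset ι} (hjS : j ∉ S)
    {w : (∀ i, Z i) → V} (hw : DepOn S w) :
    piAvg (insert j J) w = piAvg J w := by
  funext z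
  have hkey : ∑ z' ∈ Finset.univ.filter (fun z' : ∀ i, Z i => ∀ i ∈ J, z' i = z i), w z'
      = (Fintype.card (Z j) : ℝ) •
        ∑ z' ∈ Finset.univ.filter (fun z' : ∀ i, Z i => ∀ i ∈ insert j J, z' i = z i), w z' := by
    have hfib : ∑ z' ∈ Finset.univ.filter (fun z' : ∀ i, Z i => ∀ i ∈ J, z' i = z i), w z'
        = ∑ t : Z j, ∑ z' ∈ (Finset.univ.filter
            (fun z' : ∀ i, Z i => ∀ i ∈ J, z' i = z i)).filter (fun z' => z' j = t), w z' := by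
      rw [Finset.sum_fiberwise_of_maps_to (fun x _ => Finset.mem_univ (x j))]
    rw [hfib]
    have hinner : ∀ t : Z j,
        ∑ z' ∈ (Finset.univ.filter
            (fun z' : ∀ i, Z i => ∀ i ∈ J, z' i = z i)).filter (fun z' => z' j = t), w z'
        = ∑ z' ∈ Finset.univ.filter (fun z' : ∀ i, Z i => ∀ i ∈ insert j J, z' i = z i), w z' := by
      intro t
      refine Finset.sum_nbij' (fun z' => Function.update z' j (z j))
        (fun z' => Function.update z' j t) ?_ ?_ ?_ ?_ ?_
      · intro a ha
        simp only [Finset.mem_filter, Finset.mem_univ, true_and] at ha ⊢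
        intro i hi
        rcases Finset.mem_insert.mp hi with rfl | hiJ
        · simp [Function.update_self]
        · have : i ≠ j := fun h => hjJ (h ▸ hiJ)
          rw [Function.update_of_ne this]
          exact ha.1 i hiJ
      · intro a ha
        simp only [Finset.mem_filter, Finset.mem_univ, true_and] at ha ⊢
        constructor
        · intro i hiJ
          have : i ≠ j := fun h => hjJ (h ▸ hiJ)
          rw [Function.update_of_ne this]
          exact ha i (Finset.mem_insert_of_mem hiJ)
        · simp [Function.update_self]
      · intro a ha
        simp only [Finset.mem_filter, Finset.mem_univ, true_and] at ha
        show Function.update (Function.update a j (z j)) j t = a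
        rw [Function.update_idem, ← ha.2, Function.update_eq_self]
      · intro a ha
        simp only [Finset.mem_filter, Finset.mem_univ, true_and] at ha
        show Function.update (Function.update a j t) j (z j) = a
        rw [Function.update_idem, ← ha j (Finset.mem_insert_self j J), Function.update_eq_self]
      · intro a _
        apply hw
        intro i hiS
        have hij : i ≠ j := fun h => hjS (h ▸ hiS)
        exact (Function.update_of_ne hij _ _).symm
    rw [Finset.sum_congr rfl (fun t _ => hinner t), Finset.sum_const, Finset.card_univ,
      ← Nat.cast_smul_eq_nsmul ℝ]
  have hjc : j ∈ Jᶜ := Finset.mem_compl.mpr hjJ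
  have hprod : ∏ i ∈ Jᶜ, (Fintype.card (Z i) : ℝ)
      = (Fintype.card (Z j) : ℝ) * ∏ i ∈ (insert j J)ᶜ, (Fintype.card (Z i) : ℝ) := by
    rw [Finset.compl_insert]
    exact (Finset.mul_prod_erase Jᶜ (fun i => (Fintype.card (Z i) : ℝ)) hjc).symm
  have hne : (Fintype.card (Z j) : ℝ) ≠ 0 := by
    exact_mod_cast Fintype.card_ne_zero
  simp only [piAvg, hkey, hprod, smul_smul, mul_inv]
  congr 1
  field_simp

lemma Qop_eq_zero_of_depOn {H : Finset ι} {j : ι} (hjH : j ∈ H) {S : Finset ι} (hjS : j ∉ S)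
    {w : (∀ i, Z i) → V} (hw : DepOn S w) : Qop H w = 0 := by
  have hH : H = insert j (H.erase j) := (Finset.insert_erase hjH).symm
  rw [Qop, hH, Finset.sum_powerset_insert (Finset.notMem_erase j H)]
  rw [← Finset.sum_add_distrib]
  apply Finset.sum_eq_zero
  intro T hT
  rw [Finset.mem_powerset] at hT
  have hjT : j ∉ T := fun h => Finset.notMem_erase j H (hT h)
  have hpi : piAvg (insert j T) w = piAvg T w := piAvg_insert hjT hjS hw
  have hd1 : (insert j (H.erase j)) \ T = insert j ((H.erase j) \ T) :=
    Finset.insert_sdiff_of_notMem _ hjT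
  have hd2 : (insert j (H.erase j)) \ (insert j T) = (H.erase j) \ T := by
    ext x
    simp only [Finset.mem_sdiff, Finset.mem_insert, Finset.mem_erase]
    constructor
    · rintro ⟨rfl | hx, hx2⟩
      · exact absurd (Or.inl rfl) hx2
      · exact ⟨hx, fun h => hx2 (Or.inr h)⟩
    · rintro ⟨⟨hxj, hxH⟩, hxT⟩
      exact ⟨Or.inr ⟨hxj, hxH⟩, fun h => h.elim hxj hxT⟩
  have hc1 : ((insert j (H.erase j)) \ T).card = ((H.erase j) \ T).card + 1 := by
    rw [hd1, Finset.card_insert_of_notMem]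
    simp [Finset.mem_sdiff]
  rw [hpi, hd2, hc1, pow_succ]
  rw [← add_smul]
  convert zero_smul ℝ (piAvg T w)
  ring

lemma piAvg_add (J : Finset ι) (a b : (∀ i, Z i) → V) :
    piAvg J (fun x => a x + b x) = fun x => piAvg J a x + piAvg J b x := by
  funext z
  simp [piAvg, Finset.sum_add_distrib, smul_add]

lemma Qop_add (H : Finset ι) (a b : (∀ i, Z i) → V) :
    Qop H (fun x => a x + b x) = fun x => Qop H a x + Qop H b x := by
  funext z
  simp only [Qop, piAvg_add]
  rw [Finset.sum_apply, Finset.sum_apply, Finset.sum_apply, ← Finset.sum_add_distrib]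
  apply Finset.sum_congr rfl
  intro T _
  simp [smul_add]

end Aux

/-- if relative causal independence holds on a subset `Y₀` of outputs whose
embedding differences span `V`, then `u_H = 0` for every `H` meeting both `I` and `J`,
and consequently the factorization holds for all `x ∈ X` and all `y ∈ Y`. -/
theorem uH_eq_zero_of_span {m : ℕ}
    (X : Fin m → Type*) [∀ i, Fintype (X i)] [∀ i, Nonempty (X i)] [∀ i, DecidableEq (X i)]
    (Y : Type*) [Fintype Y] [Nonempty Y]
    (V : Type*) [NormedAddCommGroup V] [InnerProductSpace ℝ V] [FiniteDimensional ℝ V]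
    (u : (∀ i, X i) → V) (v : Y → V)
    (P : (∀ i, X i) → Y → ℝ)
    (hP : ∀ x y, P x y = Real.exp ⟪u x, v y⟫ / ∑ y' : Y, Real.exp ⟪u x, v y'⟫)
    (I J K : Finset (Fin m))
    (hIJ : Disjoint I J) (hIK : Disjoint I K) (hJK : Disjoint J K)
    (hIJK : I ∪ J ∪ K = Finset.univ)
    (Y₀ : Set Y)
    (hspan : Submodule.span ℝ {d : V | ∃ y ∈ Y₀, ∃ y' ∈ Y₀, d = v y - v y'} = ⊤)
    (hfact : ∃ (f g : Y → (∀ i, X i) → ℝ) (h : (∀ i, X i) → ℝ),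
      (∀ (y : Y) (x x' : ∀ i, X i), (∀ i ∈ I ∪ K, x i = x' i) → f y x = f y x') ∧
      (∀ (y : Y) (x x' : ∀ i, X i), (∀ i ∈ J ∪ K, x i = x' i) → g y x = g y x') ∧
      (∀ (x : ∀ i, X i), ∀ y ∈ Y₀, P x y = f y x * g y x * h x)) :
    (∀ H : Finset (Fin m), (H ∩ I).Nonempty → (H ∩ J).Nonempty → Qop H u = 0) ∧
    (∃ (f g : Y → (∀ i, X i) → ℝ) (h : (∀ i, X i) → ℝ),
      (∀ (y : Y) (x x' : ∀ i, X i), (∀ i ∈ I ∪ K, x i = x' i) → f y x = f y x') ∧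
      (∀ (y : Y) (x x' : ∀ i, X i), (∀ i ∈ J ∪ K, x i = x' i) → g y x = g y x') ∧
      (∀ (x : ∀ i, X i) (y : Y), P x y = f y x * g y x * h x)) := by
  obtain ⟨f, g, h, hf, hg, hPf⟩ := hfact
  set Zf : (∀ i, X i) → ℝ := fun x => ∑ y' : Y, Real.exp ⟪u x, v y'⟫ with hZf
  have hZpos : ∀ x, 0 < Zf x := fun x =>
    Finset.sum_pos (fun y' _ => Real.exp_pos _) Finset.univ_nonempty
  have hPpos : ∀ x y, 0 < P x y := fun x y => by
    rw [hP]; exact div_pos (Real.exp_pos _) (hZpos x)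
  -- the submodule of separable directions
  let Wcar : Set V := {d | ∃ φ ψ : (∀ i, X i) → ℝ, DepOn (I ∪ K) φ ∧ DepOn (J ∪ K) ψ ∧
      ∀ x, ⟪u x, d⟫ = φ x + ψ x}
  let W : Submodule ℝ V :=
    { carrier := Wcar
      add_mem' := by
        rintro d d' ⟨φ, ψ, hφ, hψ, hd⟩ ⟨φ', ψ', hφ', hψ', hd'⟩
        refine ⟨fun x => φ x + φ' x, fun x => ψ x + ψ' x, ?_, ?_, ?_⟩
        · intro x x' hxx'
          show φ x + φ' x = φ x' + φ' x'
          rw [hφ x x' hxx', hφ' x x' hxx']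
        · intro x x' hxx'
          show ψ x + ψ' x = ψ x' + ψ' x'
          rw [hψ x x' hxx', hψ' x x' hxx']
        · intro x; rw [inner_add_right, hd x, hd' x]; ring
      zero_mem' := ⟨0, 0, fun _ _ _ => rfl, fun _ _ _ => rfl, fun x => by simp⟩
      smul_mem' := by
        rintro c d ⟨φ, ψ, hφ, hψ, hd⟩
        refine ⟨fun x => c * φ x, fun x => c * ψ x, ?_, ?_, ?_⟩
        · intro x x' hxx'
          show c * φ x = c * φ x'
          rw [hφ x x' hxx']
        · intro x x' hxx'
          show c * ψ x = c * ψ x'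
          rw [hψ x x' hxx']
        · intro x; rw [real_inner_smul_right, hd x]; ring }
  have hfne : ∀ x, ∀ y ∈ Y₀, f y x ≠ 0 ∧ g y x ≠ 0 := by
    intro x y hy
    have := (hPf x y hy) ▸ (hPpos x y).ne'
    exact ⟨fun h0 => this (by rw [h0]; ring), fun h0 => this (by rw [h0]; ring)⟩
  have hlogP : ∀ x, ∀ y ∈ Y₀,
      Real.log (P x y) = Real.log (f y x) + Real.log (g y x) + Real.log (h x) := by
    intro x y hy
    obtain ⟨hfy, hgy⟩ := hfne x y hy
    have hh : h x ≠ 0 := by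
      intro h0
      exact (hPpos x y).ne' (by rw [hPf x y hy, h0, mul_zero])
    rw [hPf x y hy, Real.log_mul (mul_ne_zero hfy hgy) hh, Real.log_mul hfy hgy]
  have hinner_logP : ∀ x y, ⟪u x, v y⟫ = Real.log (P x y) + Real.log (Zf x) := by
    intro x y
    have : Real.exp ⟪u x, v y⟫ = P x y * Zf x := by
      rw [hP x y, div_mul_cancel₀]
      exact (hZpos x).ne'
    rw [← Real.log_exp ⟪u x, v y⟫, this,
      Real.log_mul (hPpos x y).ne' (hZpos x).ne']
  have hspanW : ∀ d : V, d ∈ W := by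
    have hsub : {d : V | ∃ y ∈ Y₀, ∃ y' ∈ Y₀, d = v y - v y'} ⊆ (W : Set V) := by
      rintro d ⟨y, hy, y', hy', rfl⟩
      refine ⟨fun x => Real.log (f y x) - Real.log (f y' x),
        fun x => Real.log (g y x) - Real.log (g y' x), ?_, ?_, ?_⟩
      · intro x x' hxx'
        show Real.log (f y x) - Real.log (f y' x) = Real.log (f y x') - Real.log (f y' x')
        rw [hf y x x' hxx', hf y' x x' hxx']
      · intro x x' hxx'
        show Real.log (g y x) - Real.log (g y' x) = Real.log (g y x') - Real.log (g y' x')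
        rw [hg y x x' hxx', hg y' x x' hxx']
      · intro x
        show (inner ℝ (u x) (v y - v y') : ℝ) = _
        rw [inner_sub_right, hinner_logP x y, hinner_logP x y', hlogP x y hy, hlogP x y' hy']
        ring
    intro d
    have : Submodule.span ℝ {d : V | ∃ y ∈ Y₀, ∃ y' ∈ Y₀, d = v y - v y'} ≤ W :=
      Submodule.span_le.mpr hsub
    exact this (hspan ▸ Submodule.mem_top)
  -- decompose u = a + b
  let bas := stdOrthonormalBasis ℝ V
  have hmem : ∀ k, ∃ φ ψ : (∀ i, X i) → ℝ, DepOn (I ∪ K) φ ∧ DepOn (J ∪ K) ψ ∧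
      ∀ x, ⟪u x, bas k⟫ = φ x + ψ x := fun k => hspanW (bas k)
  choose φ ψ hφ hψ hφψ using hmem
  set a : (∀ i, X i) → V := fun x => ∑ k, φ k x • bas k with ha_def
  set b : (∀ i, X i) → V := fun x => ∑ k, ψ k x • bas k with hb_def
  have hab : ∀ x, u x = a x + b x := by
    intro x
    have hrepr := bas.sum_repr' (u x)
    calc u x = ∑ k, ⟪bas k, u x⟫ • bas k := hrepr.symm
      _ = ∑ k, (φ k x + ψ k x) • bas k := by
          apply Finset.sum_congr rfl
          intro k _
          rw [real_inner_comm, hφψ k x]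
      _ = a x + b x := by
          simp only [add_smul, Finset.sum_add_distrib, ha_def, hb_def]
  have hau : u = fun x => a x + b x := funext hab
  have haDep : DepOn (I ∪ K) (Z := X) a := by
    intro x x' hxx'
    simp only [ha_def]
    exact Finset.sum_congr rfl fun k _ => by rw [hφ k x x' hxx']
  have hbDep : DepOn (J ∪ K) (Z := X) b := by
    intro x x' hxx'
    simp only [hb_def]
    exact Finset.sum_congr rfl fun k _ => by rw [hψ k x x' hxx']
  constructor
  · intro H hHI hHJ
    obtain ⟨i0, hi0⟩ := hHI
    obtain ⟨j0, hj0⟩ := hHJ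
    rw [Finset.mem_inter] at hi0 hj0
    have hj0IK : j0 ∉ I ∪ K := by
      rw [Finset.mem_union]
      rintro (hj | hj)
      · exact (Finset.disjoint_right.mp hIJ hj0.2) hj
      · exact (Finset.disjoint_left.mp hJK hj0.2) hj
    have hi0JK : i0 ∉ J ∪ K := by
      rw [Finset.mem_union]
      rintro (hi | hi)
      · exact (Finset.disjoint_left.mp hIJ hi0.2) hi
      · exact (Finset.disjoint_left.mp hIK hi0.2) hi
    rw [hau, Qop_add]
    have h1 : Qop H a = 0 := Qop_eq_zero_of_depOn hj0.1 hj0IK haDep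
    have h2 : Qop H b = 0 := Qop_eq_zero_of_depOn hi0.1 hi0JK hbDep
    funext z
    simp [h1, h2]
  · refine ⟨fun y x => Real.exp ⟪a x, v y⟫, fun y x => Real.exp ⟪b x, v y⟫,
      fun x => (Zf x)⁻¹, ?_, ?_, ?_⟩
    · intro y x x' hxx'
      show Real.exp ⟪a x, v y⟫ = Real.exp ⟪a x', v y⟫
      rw [haDep x x' hxx']
    · intro y x x' hxx'
      show Real.exp ⟪b x, v y⟫ = Real.exp ⟪b x', v y⟫
      rw [hbDep x x' hxx']
    · intro x y
      show P x y = Real.exp ⟪a x, v y⟫ * Real.exp ⟪b x, v y⟫ * (Zf x)⁻¹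
      rw [hP x y, ← Real.exp_add, ← inner_add_left, ← hab x, div_eq_mul_inv]
end
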